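/- arXiv:2105.03823 — 4 statements merged into one kernel-verified Lean document; each statement's English description precedes it below -/
import Mathlib

section
/- For positive definite operators A, B, C on a Hilbert space, R(A,C) ≤ R(A,B)·R(B,C), where R(X,Y) = max{r(X⁻¹Y), r(Y⁻¹X)} and r denotes spectral radius. -/
set_option synthInstance.maxHeartbeats 400000
set_option maxHeartbeats 800000

open scoped NNReal ENNReal
open ContinuousLinearMap Filter

section Aux

variable {A : Type*} [CStarAlgebra A] [PartialOrder A] [StarOrderedRing A]

lemma aux_sqrt_isUnit {a : A} (ha : 0 ≤ a) (hau : IsUnit a) : IsUnit (CFC.sqrt a) := by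
  obtain ⟨u, rfl⟩ := hau
  set s := CFC.sqrt (u : A) with hs
  have h : s * s = (u : A) := CFC.sqrt_mul_sqrt_self _ ha
  have hc : (u : A) * s = s * (u : A) := by rw [← h, mul_assoc]
  have hcomm : Commute (u : A) s := hc
  have hci : Commute (↑u⁻¹ : A) s := hcomm.units_inv_left
  refine ⟨⟨s, s * ↑u⁻¹, ?_, ?_⟩, rfl⟩
  · rw [← mul_assoc, h, u.mul_inv]
  · rw [mul_assoc, hci.eq, ← mul_assoc, h, u.mul_inv]

/-- Conjugation packaging for `Ring.inverse a * b`. -/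
lemma aux_pack {a b : A} (ha : 0 ≤ a) (hau : IsUnit a) (hb : 0 ≤ b) :
    ∃ s : Aˣ, 0 ≤ (s : A) ∧ (s : A) * s = a ∧ 0 ≤ (↑s⁻¹ : A) * b * ↑s⁻¹ ∧
      (spectralRadius ℂ (Ring.inverse a * b)).toReal = ‖(↑s⁻¹ : A) * b * ↑s⁻¹‖ := by
  obtain ⟨s, hsc⟩ := aux_sqrt_isUnit ha hau
  have hs0 : 0 ≤ (s : A) := hsc ▸ CFC.sqrt_nonneg _
  have hss : (s : A) * s = a := by rw [hsc]; exact CFC.sqrt_mul_sqrt_self _ ha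
  have hsi0 : 0 ≤ (↑s⁻¹ : A) := CFC.inv_nonneg_of_nonneg s hs0
  have hp0 : 0 ≤ (↑s⁻¹ : A) * b * ↑s⁻¹ := conjugate_nonneg_of_nonneg hb hsi0
  refine ⟨s, hs0, hss, hp0, ?_⟩
  have hinv : Ring.inverse a = (↑s⁻¹ : A) * ↑s⁻¹ := by
    rw [← hss, show (s : A) * s = ((s * s : Aˣ) : A) from rfl, Ring.inverse_unit,
      mul_inv_rev]
    rfl
  have hkey : Ring.inverse a * b = ↑s⁻¹ * ((↑s⁻¹ : A) * b * ↑s⁻¹) * ↑s := by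
    rw [hinv]
    simp [mul_assoc, Units.inv_mul, mul_one]
  have hspec : spectrum ℂ (Ring.inverse a * b) = spectrum ℂ ((↑s⁻¹ : A) * b * ↑s⁻¹) := by
    rw [hkey]
    exact spectrum.units_conjugate'
  have hsr : spectralRadius ℂ (Ring.inverse a * b)
      = spectralRadius ℂ ((↑s⁻¹ : A) * b * ↑s⁻¹) := by
    unfold spectralRadius
    rw [hspec]
  rw [hsr]
  exact (IsSelfAdjoint.of_nonneg hp0).toReal_spectralRadius_complex_eq_norm

lemma aux_mul_alg_mono {t : ℝ} (ht : 0 ≤ t) {x y : A} (h : x ≤ y) :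
    algebraMap ℝ A t * x ≤ algebraMap ℝ A t * y := by
  set c := algebraMap ℝ A (Real.sqrt t) with hc
  have hcsa : IsSelfAdjoint c := IsSelfAdjoint.algebraMap A (isSelfAdjoint_iff.mpr rfl)
  have hcc : algebraMap ℝ A t = c * c := by
    rw [hc, ← map_mul, Real.mul_self_sqrt ht]
  have h1 : ∀ z : A, algebraMap ℝ A t * z = star c * z * c := by
    intro z
    rw [hcsa.star_eq, hcc, mul_assoc, mul_assoc, (Algebra.commutes (Real.sqrt t) z).symm, ← mul_assoc]
  rw [h1 x, h1 y]
  exact star_left_conjugate_le_conjugate h c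

/-- Upper bound: `b ≤ r(a⁻¹ b) • a`. -/
lemma aux_le_smul {a b : A} (ha : 0 ≤ a) (hau : IsUnit a) (hb : 0 ≤ b) :
    b ≤ algebraMap ℝ A (spectralRadius ℂ (Ring.inverse a * b)).toReal * a := by
  obtain ⟨s, hs0, hss, hp0, hr⟩ := aux_pack ha hau hb
  set p := (↑s⁻¹ : A) * b * ↑s⁻¹ with hp
  have h1 : p ≤ algebraMap ℝ A ‖p‖ := IsSelfAdjoint.le_algebraMap_norm_self
    (IsSelfAdjoint.of_nonneg hp0)
  have hsa : IsSelfAdjoint (s : A) := IsSelfAdjoint.of_nonneg hs0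
  have h2 := star_left_conjugate_le_conjugate h1 (s : A)
  rw [hsa.star_eq] at h2
  have h3 : (s : A) * p * s = b := by
    rw [hp]
    simp [mul_assoc, Units.mul_inv, Units.inv_mul, mul_one]
  have h4 : (s : A) * algebraMap ℝ A ‖p‖ * s = algebraMap ℝ A ‖p‖ * a := by
    rw [← Algebra.commutes ‖p‖ (s : A), mul_assoc, hss]
  rw [h3, h4] at h2
  rwa [hr]

/-- Lower bound: if `b ≤ t • a` then `r(a⁻¹ b) ≤ t`. -/
lemma aux_smul_le {a b : A} (ha : 0 ≤ a) (hau : IsUnit a) (hb : 0 ≤ b) {t : ℝ} (ht : 0 ≤ t)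
    (h : b ≤ algebraMap ℝ A t * a) :
    (spectralRadius ℂ (Ring.inverse a * b)).toReal ≤ t := by
  obtain ⟨s, hs0, hss, hp0, hr⟩ := aux_pack ha hau hb
  set p := (↑s⁻¹ : A) * b * ↑s⁻¹ with hp
  have hsi0 : 0 ≤ (↑s⁻¹ : A) := CFC.inv_nonneg_of_nonneg s hs0
  have hsia : IsSelfAdjoint (↑s⁻¹ : A) := IsSelfAdjoint.of_nonneg hsi0
  have h2 := star_left_conjugate_le_conjugate h (↑s⁻¹ : A)
  rw [hsia.star_eq] at h2
  have hc1 : (↑s⁻¹ : A) * algebraMap ℝ A t = algebraMap ℝ A t * ↑s⁻¹ :=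
    (Algebra.commutes t _).symm
  have h3 : (↑s⁻¹ : A) * (algebraMap ℝ A t * a) * ↑s⁻¹ = algebraMap ℝ A t := by
    rw [← mul_assoc (↑s⁻¹ : A) (algebraMap ℝ A t) a, hc1, mul_assoc, mul_assoc, ← hss]
    simp [← mul_assoc]
  rw [h3] at h2
  rw [hr]
  exact (CStarAlgebra.norm_le_iff_le_algebraMap p ht hp0).mpr h2

end Aux

variable {H : Type*} [NormedAddCommGroup H] [InnerProductSpace ℂ H] [CompleteSpace H]

/-- A bounded operator is positive definite: positive (semi-definite) and invertible. -/
def IsPosDef (A : H →L[ℂ] H) : Prop := A.IsPositive ∧ IsUnit A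

/-- `R(A,B) = max {r(A⁻¹B), r(B⁻¹A)}` where `r` is the spectral radius. -/
noncomputable def Rdist (A B : H →L[ℂ] H) : ℝ :=
  max (spectralRadius ℂ (Ring.inverse A * B)).toReal
    (spectralRadius ℂ (Ring.inverse B * A)).toReal

lemma Rdist_nonneg (A B : H →L[ℂ] H) : 0 ≤ Rdist A B :=
  le_max_of_le_left ENNReal.toReal_nonneg

lemma aux_alg_mono_left {t t' : ℝ} (ht : 0 ≤ t) (h : t ≤ t') {a : H →L[ℂ] H} (ha : 0 ≤ a) :
    algebraMap ℝ (H →L[ℂ] H) t * a ≤ algebraMap ℝ (H →L[ℂ] H) t' * a := by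
  rw [← sub_nonneg, ← sub_mul, ← map_sub]
  have h0 : algebraMap ℝ (H →L[ℂ] H) (t' - t) * 0 ≤ algebraMap ℝ (H →L[ℂ] H) (t' - t) * a :=
    aux_mul_alg_mono (sub_nonneg.mpr h) ha
  simpa using h0

lemma Rdist_comm (A B : H →L[ℂ] H) : Rdist A B = Rdist B A := max_comm _ _

lemma le_alg_Rdist {A B : H →L[ℂ] H} (hA : IsPosDef A) (hB : IsPosDef B) :
    B ≤ algebraMap ℝ (H →L[ℂ] H) (Rdist A B) * A := by
  have ha := (ContinuousLinearMap.nonneg_iff_isPositive A).mpr hA.1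
  have hb := (ContinuousLinearMap.nonneg_iff_isPositive B).mpr hB.1
  refine le_trans (aux_le_smul ha hA.2 hb) ?_
  exact aux_alg_mono_left ENNReal.toReal_nonneg (le_max_left _ _) ha

/-- Multiplicative triangle inequality: `R(A,C) ≤ R(A,B) * R(B,C)`. -/
theorem stmt_2 (A B C : H →L[ℂ] H) (hA : IsPosDef A) (hB : IsPosDef B)
    (hC : IsPosDef C) : Rdist A C ≤ Rdist A B * Rdist B C := by
  have ha := (ContinuousLinearMap.nonneg_iff_isPositive A).mpr hA.1
  have hb := (ContinuousLinearMap.nonneg_iff_isPositive B).mpr hB.1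
  have hc := (ContinuousLinearMap.nonneg_iff_isPositive C).mpr hC.1
  set r1 := Rdist A B with hr1
  set r2 := Rdist B C with hr2
  have hr1n : 0 ≤ r1 := Rdist_nonneg A B
  have hr2n : 0 ≤ r2 := Rdist_nonneg B C
  have hCB : C ≤ algebraMap ℝ (H →L[ℂ] H) r2 * B := le_alg_Rdist hB hC
  have hBA : B ≤ algebraMap ℝ (H →L[ℂ] H) r1 * A := le_alg_Rdist hA hB
  have hAB : A ≤ algebraMap ℝ (H →L[ℂ] H) r1 * B := by
    rw [hr1, Rdist_comm]; exact le_alg_Rdist hB hA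
  have hBC : B ≤ algebraMap ℝ (H →L[ℂ] H) r2 * C := by
    rw [hr2, Rdist_comm]; exact le_alg_Rdist hC hB
  have hCA : C ≤ algebraMap ℝ (H →L[ℂ] H) (r1 * r2) * A := by
    refine hCB.trans ?_
    calc algebraMap ℝ (H →L[ℂ] H) r2 * B
        ≤ algebraMap ℝ (H →L[ℂ] H) r2 * (algebraMap ℝ (H →L[ℂ] H) r1 * A) :=
          aux_mul_alg_mono hr2n hBA
      _ = algebraMap ℝ (H →L[ℂ] H) (r1 * r2) * A := by
          rw [← mul_assoc, ← map_mul, mul_comm r2 r1]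
  have hAC : A ≤ algebraMap ℝ (H →L[ℂ] H) (r1 * r2) * C := by
    refine hAB.trans ?_
    calc algebraMap ℝ (H →L[ℂ] H) r1 * B
        ≤ algebraMap ℝ (H →L[ℂ] H) r1 * (algebraMap ℝ (H →L[ℂ] H) r2 * C) :=
          aux_mul_alg_mono hr1n hBC
      _ = algebraMap ℝ (H →L[ℂ] H) (r1 * r2) * C := by
          rw [← mul_assoc, ← map_mul]
  exact max_le (aux_smul_le ha hA.2 hc (mul_nonneg hr1n hr2n) hCA)
    (aux_smul_le hc hC.2 ha (mul_nonneg hr1n hr2n) hAC)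
end

section
/- For positive definite operators A, B on a Hilbert space, ‖A − B‖ ≤ (R(A,B) − 1)·‖A‖, where R(A,B) = max{r(A⁻¹B), r(B⁻¹A)} and r denotes spectral radius. -/
set_option synthInstance.maxHeartbeats 400000
set_option maxHeartbeats 800000

open scoped NNReal ENNReal
open ContinuousLinearMap Filter

variable {H : Type*} [NormedAddCommGroup H] [InnerProductSpace ℂ H] [CompleteSpace H]

lemma exists_sqrt_unit (A : H →L[ℂ] H) (hA : IsPosDef A) :
    ∃ u : (H →L[ℂ] H)ˣ, (0 : H →L[ℂ] H) ≤ ↑u ∧ (↑u : H →L[ℂ] H) * ↑u = A := by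
  have hA0 : 0 ≤ A := (ContinuousLinearMap.nonneg_iff_isPositive A).2 hA.1
  set s := CFC.sqrt A with hs
  have hss : s * s = A := CFC.sqrt_mul_sqrt_self A hA0
  have hcomm : Commute s A := by
    rw [← hss]; exact (Commute.refl s).mul_right (Commute.refl s)
  obtain ⟨v, hv⟩ := hA.2
  have hcv : Commute s ↑v⁻¹ := by
    have : Commute s ↑v := by rw [hv]; exact hcomm
    exact Commute.units_inv_right this
  refine ⟨⟨s, ↑v⁻¹ * s, ?_, ?_⟩, CFC.sqrt_nonneg A, hss⟩
  · rw [← mul_assoc, hcv.eq, mul_assoc, hss, ← hv, Units.inv_mul]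
  · rw [mul_assoc, hss, ← hv, Units.inv_mul]

lemma smul_nonneg'' {r : ℝ} (hr : 0 ≤ r) {a : H →L[ℂ] H} (ha : 0 ≤ a) : 0 ≤ r • a := by
  have h := star_left_conjugate_nonneg ha ((Real.sqrt r : ℂ) • (1 : H →L[ℂ] H))
  have hstar : star ((Real.sqrt r : ℂ) • (1 : H →L[ℂ] H)) = (Real.sqrt r : ℂ) • 1 := by
    simp [star_smul, Complex.conj_ofReal]
  rw [hstar, smul_mul_assoc, one_mul, mul_smul_comm, mul_one, smul_smul, ← Complex.ofReal_mul,
    Real.mul_self_sqrt hr] at h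
  rwa [← Complex.coe_smul]

lemma key_le (A B : H →L[ℂ] H) (hA : IsPosDef A) (hB : IsPosDef B) :
    B ≤ (spectralRadius ℂ (Ring.inverse A * B)).toReal • A := by
  obtain ⟨u, hu0, huu⟩ := exists_sqrt_unit A hA
  have hB0 : 0 ≤ B := (ContinuousLinearMap.nonneg_iff_isPositive B).2 hB.1
  have husa : IsSelfAdjoint (↑u : H →L[ℂ] H) := .of_nonneg hu0
  have huinv_sa : star (↑u⁻¹ : H →L[ℂ] H) = ↑u⁻¹ := by
    have h1 : star (↑u⁻¹ : H →L[ℂ] H) * ↑u = 1 := by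
      rw [← husa.star_eq, ← star_mul, u.mul_inv, star_one]
    calc star (↑u⁻¹ : H →L[ℂ] H) = star ↑u⁻¹ * (↑u * ↑u⁻¹) := by rw [u.mul_inv, mul_one]
      _ = star ↑u⁻¹ * ↑u * ↑u⁻¹ := by rw [mul_assoc]
      _ = ↑u⁻¹ := by rw [h1, one_mul]
  have hAinv : Ring.inverse A = (↑u⁻¹ : H →L[ℂ] H) * ↑u⁻¹ := by
    rw [← huu, ← Units.val_mul, Ring.inverse_unit, mul_inv_rev, Units.val_mul]
  set C : H →L[ℂ] H := ↑u⁻¹ * B * ↑u⁻¹ with hC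
  have hC0 : 0 ≤ C := by
    have := star_left_conjugate_nonneg hB0 (↑u⁻¹ : H →L[ℂ] H)
    rwa [huinv_sa] at this
  have hCsa : IsSelfAdjoint C := .of_nonneg hC0
  have hconj : Ring.inverse A * B = ↑u⁻¹ * C * ↑u := by
    rw [hAinv]
    simp [hC, mul_assoc, Units.inv_mul]
  have hspec : spectrum ℂ (Ring.inverse A * B) = spectrum ℂ C := by
    rw [hconj]; exact spectrum.units_conjugate'
  have hrad : (spectralRadius ℂ (Ring.inverse A * B)).toReal = ‖C‖ := by
    unfold spectralRadius
    rw [hspec, ← spectralRadius, hCsa.spectralRadius_eq_nnnorm]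
    simp
  rw [hrad]
  have h1 : C ≤ algebraMap ℝ (H →L[ℂ] H) ‖C‖ := IsSelfAdjoint.le_algebraMap_norm_self hCsa
  have h2 := star_left_conjugate_le_conjugate h1 (↑u : H →L[ℂ] H)
  rw [husa.star_eq] at h2
  have hBu : (↑u : H →L[ℂ] H) * C * ↑u = B := by
    simp [hC, mul_assoc, Units.mul_inv_cancel_left, Units.inv_mul]
  have halg : (↑u : H →L[ℂ] H) * algebraMap ℝ (H →L[ℂ] H) ‖C‖ * ↑u = ‖C‖ • A := by
    rw [Algebra.algebraMap_eq_smul_one, mul_smul_comm, mul_one, smul_mul_assoc, huu]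
  rwa [hBu, halg] at h2

lemma posdef_inner_pos (A : H →L[ℂ] H) (hA : IsPosDef A) {x : H} (hx : x ≠ 0) :
    0 < Complex.re (inner ℂ (A x) x : ℂ) := by
  obtain ⟨u, hu0, huu⟩ := exists_sqrt_unit A hA
  have husa : IsSelfAdjoint (↑u : H →L[ℂ] H) := .of_nonneg hu0
  have hux : (↑u : H →L[ℂ] H) x ≠ 0 := by
    intro h
    have : ((↑u⁻¹ : H →L[ℂ] H) * ↑u) x = x := by rw [u.inv_mul]; rfl
    rw [ContinuousLinearMap.mul_apply, h, map_zero] at this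
    exact hx this.symm
  have hAx : A x = (↑u : H →L[ℂ] H) ((↑u : H →L[ℂ] H) x) := by
    rw [← huu]; rfl
  have hadj : ContinuousLinearMap.adjoint (↑u : H →L[ℂ] H) = ↑u := by
    rw [← ContinuousLinearMap.star_eq_adjoint, husa.star_eq]
  have h5 := ContinuousLinearMap.adjoint_inner_left (↑u : H →L[ℂ] H)
    ((↑u : H →L[ℂ] H) x) x
  rw [hadj] at h5
  rw [hAx, ← inner_conj_symm, ← h5, inner_conj_symm, inner_self_eq_norm_sq_to_K]
  norm_cast
  exact pow_pos (norm_pos_iff.2 hux) 2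

lemma smul_le_smul_A {r s : ℝ} (h : r ≤ s) {a : H →L[ℂ] H} (ha : 0 ≤ a) : r • a ≤ s • a := by
  have h1 := smul_nonneg'' (sub_nonneg.2 h) ha
  rw [sub_smul] at h1
  exact sub_nonneg.1 h1

/-- `‖A - B‖ ≤ (R(A,B) - 1) * ‖A‖`. -/
theorem stmt_3 (A B : H →L[ℂ] H) (hA : IsPosDef A) (hB : IsPosDef B) :
    ‖A - B‖ ≤ (Rdist A B - 1) * ‖A‖ := by
  rcases subsingleton_or_nontrivial H with hH | hH
  · have h1 : A - B = 0 := Subsingleton.elim _ _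
    have h2 : A = 0 := Subsingleton.elim _ _
    rw [h1, h2, norm_zero, mul_zero]
  set R := Rdist A B with hR
  have hA0 : 0 ≤ A := (ContinuousLinearMap.nonneg_iff_isPositive A).2 hA.1
  have hB0 : 0 ≤ B := (ContinuousLinearMap.nonneg_iff_isPositive B).2 hB.1
  have hAsa : IsSelfAdjoint A := hA.1.isSelfAdjoint
  have hBsa : IsSelfAdjoint B := hB.1.isSelfAdjoint
  have hR0 : 0 ≤ R := le_trans ENNReal.toReal_nonneg (le_max_left _ _)
  have hAB : B ≤ R • A := (key_le A B hA hB).trans (smul_le_smul_A (le_max_left _ _) hA0)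
  have hBA : A ≤ R • B := (key_le B A hB hA).trans (smul_le_smul_A (le_max_right _ _) hB0)
  -- R ≥ 1
  have hR1 : 1 ≤ R := by
    obtain ⟨x, hx⟩ := exists_ne (0 : H)
    have h2 : A ≤ (R * R) • A := by
      refine hBA.trans ?_
      have h3 := smul_nonneg'' hR0 (sub_nonneg.2 hAB)
      have e : R • (R • A - B) = (R * R) • A - R • B := by rw [smul_sub, smul_smul]
      rw [e] at h3
      exact sub_nonneg.1 h3
    have h3 : (0 : H →L[ℂ] H) ≤ (R * R - 1) • A := by
      have h4 := sub_nonneg.2 h2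
      rwa [show (R * R) • A - A = (R * R - 1) • A by module] at h4
    have h5 := ((ContinuousLinearMap.nonneg_iff_isPositive _).1 h3).inner_nonneg_left x
    have h5' : 0 ≤ (R * R - 1) * Complex.re (inner ℂ (A x) x : ℂ) := by
      simpa [ContinuousLinearMap.smul_apply,
        show (R * R - 1) • (A x) = ((R * R - 1 : ℝ) : ℂ) • (A x) from (Complex.coe_smul _ _).symm,
        inner_smul_left, Complex.conj_ofReal, Complex.re_ofReal_mul, Complex.mul_re] using
          (Complex.nonneg_iff.1 h5).1
    have h7 := posdef_inner_pos A hA hx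
    have h8 : 1 ≤ R * R := by nlinarith [h5', h7]
    nlinarith [h8, hR0]
  have hRpos : (0 : ℝ) < R := lt_of_lt_of_le one_pos hR1
  set c := (R - 1) * ‖A‖ with hc
  have hc0 : 0 ≤ c := mul_nonneg (by linarith) (norm_nonneg A)
  have hTsa : IsSelfAdjoint (A - B) := hAsa.sub hBsa
  have step4 : (R - 1) • A ≤ algebraMap ℝ (H →L[ℂ] H) c := by
    have h1 := smul_nonneg'' (show (0:ℝ) ≤ R - 1 by linarith)
      (sub_nonneg.2 (IsSelfAdjoint.le_algebraMap_norm_self hAsa))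
    have e : (R - 1) • (algebraMap ℝ (H →L[ℂ] H) ‖A‖ - A)
        = algebraMap ℝ (H →L[ℂ] H) c - (R - 1) • A := by
      rw [smul_sub]
      congr 1
      rw [Algebra.algebraMap_eq_smul_one, Algebra.algebraMap_eq_smul_one, smul_smul]
    rw [e] at h1
    exact sub_nonneg.1 h1
  have h_up : A - B ≤ algebraMap ℝ (H →L[ℂ] H) c := by
    have step1 : (1 / R) • A ≤ B := by
      have h1 := smul_nonneg'' (le_of_lt (one_div_pos.2 hRpos)) (sub_nonneg.2 hBA)
      have e : (1 / R) • (R • B - A) = B - (1 / R) • A := by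
        rw [smul_sub, smul_smul, one_div, inv_mul_cancel₀ (ne_of_gt hRpos), one_smul]
      rw [e] at h1
      exact sub_nonneg.1 h1
    have step2 : A - B ≤ (1 - 1 / R) • A := by
      have h1 := sub_nonneg.2 step1
      rwa [show B - (1 / R) • A = (1 - 1/R) • A - (A - B) by module, sub_nonneg] at h1
    have step3 : (1 - 1 / R) • A ≤ (R - 1) • A := by
      refine smul_le_smul_A ?_ hA0
      have hRR : R * (1 / R) = 1 := by field_simp
      nlinarith [sq_nonneg (R - 1)]
    exact step2.trans (step3.trans step4)
  have h_low : algebraMap ℝ (H →L[ℂ] H) (-c) ≤ A - B := by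
    have step0 : B - A ≤ (R - 1) • A := by
      have h1 := sub_nonneg.2 hAB
      rwa [show R • A - B = (R - 1) • A - (B - A) by module, sub_nonneg] at h1
    have h2 : B - A ≤ algebraMap ℝ (H →L[ℂ] H) c := step0.trans step4
    have h3 := sub_nonneg.2 h2
    have e : algebraMap ℝ (H →L[ℂ] H) c - (B - A)
        = (A - B) - algebraMap ℝ (H →L[ℂ] H) (-c) := by
      rw [map_neg]; abel
    rw [e] at h3
    exact sub_nonneg.1 h3
  -- spectrum bound
  have habs : ∀ k ∈ spectrum ℝ (A - B), |k| ≤ c := by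
    intro k hk
    rw [abs_le]
    exact ⟨(algebraMap_le_iff_le_spectrum hTsa).1 h_low k hk,
      (le_algebraMap_iff_spectrum_le hTsa).1 h_up k hk⟩
  have hsr : spectralRadius ℝ (A - B) ≤ ENNReal.ofReal c := by
    rw [spectralRadius]
    refine iSup₂_le fun k hk => ?_
    rw [← enorm_eq_nnnorm, Real.enorm_eq_ofReal_abs]
    exact ENNReal.ofReal_le_ofReal (by simpa [Real.norm_eq_abs] using habs k hk)
  have hfin := ENNReal.toReal_mono (by simp) hsr
  rwa [hTsa.toReal_spectralRadius_eq_norm, ENNReal.toReal_ofReal hc0] at hfin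
end

section
/- Let Φ be a unital positive linear map on B(H), let A, B be positive definite operators, let ν ∈ (0,1], and set R = R(A,B) = max{r(A⁻¹B), r(B⁻¹A)}. Then K(R², ν)·(Φ(A) ♯ν Φ(B)) ≤ Φ(A ♯ν B), where K(h,ν) = ((h^ν − h)/((ν−1)(h−1)))·((ν−1)(h^ν−1)/(ν(h^ν−h)))^ν is the generalized Kantorovich constant and A ♯ν B = A^{1/2}(A^{-1/2}BA^{-1/2})^ν A^{1/2} is the weighted geometric mean. -/
set_option synthInstance.maxHeartbeats 400000
set_option synthInstance.maxHeartbeats 1000000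
set_option maxHeartbeats 1600000
set_option maxHeartbeats 800000

open scoped NNReal ENNReal
open ContinuousLinearMap Filter

variable {H : Type*} [NormedAddCommGroup H] [InnerProductSpace ℂ H] [CompleteSpace H]

/-- The weighted geometric mean `A ♯ν B = A^(1/2) (A^(-1/2) B A^(-1/2))^ν A^(1/2)`. -/
noncomputable def wgm (ν : ℝ) (A B : H →L[ℂ] H) : H →L[ℂ] H :=
  CFC.sqrt A * CFC.rpow (CFC.sqrt (Ring.inverse A) * B * CFC.sqrt (Ring.inverse A)) ν *
    CFC.sqrt A

/-- The geometric mean `A ♯ B`. -/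
noncomputable def gm (A B : H →L[ℂ] H) : H →L[ℂ] H := wgm (1/2) A B

/-- The generalized Kantorovich constant `K(h, ν)`. -/
noncomputable def Kconst (h ν : ℝ) : ℝ :=
  ((h ^ ν - h) / ((ν - 1) * (h - 1))) *
    (((ν - 1) * (h ^ ν - 1)) / (ν * (h ^ ν - h))) ^ ν

lemma chord_le {m M ν t : ℝ} (hm : 0 < m) (hmM : m < M) (hν0 : 0 ≤ ν) (hν1 : ν ≤ 1)
    (ht : t ∈ Set.Icc m M) :
    ((M ^ ν - m ^ ν) / (M - m)) * t + (M * m ^ ν - m * M ^ ν) / (M - m) ≤ t ^ ν := by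
  obtain ⟨ht1, ht2⟩ := ht
  have hMm : 0 < M - m := by linarith
  set lam := (M - t) / (M - m) with hlam
  have hlam0 : 0 ≤ lam := div_nonneg (by linarith) hMm.le
  have hlam1 : 0 ≤ 1 - lam := by
    have : lam ≤ 1 := by rw [hlam, div_le_one hMm]; linarith
    linarith
  have hconv := (Real.concaveOn_rpow hν0 hν1).2 (Set.mem_Ici.mpr hm.le)
    (Set.mem_Ici.mpr (by linarith : (0:ℝ) ≤ M)) hlam0 hlam1 (by ring)
  simp only [smul_eq_mul] at hconv
  have heq1 : lam * m + (1 - lam) * M = t := by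
    rw [hlam]; field_simp; ring
  have heq2 : lam * (m ^ ν) + (1 - lam) * (M ^ ν) =
      ((M ^ ν - m ^ ν) / (M - m)) * t + (M * m ^ ν - m * M ^ ν) / (M - m) := by
    rw [hlam]; field_simp; ring
  rw [heq1, heq2] at hconv
  exact hconv

lemma kan_le {R ν t : ℝ} (hR : 1 < R) (hν0 : 0 < ν) (hν1 : ν < 1) (ht : 0 < t) :
    Kconst (R ^ 2) ν * t ^ ν ≤
      ((R ^ ν - R⁻¹ ^ ν) / (R - R⁻¹)) * t + (R * R⁻¹ ^ ν - R⁻¹ * R ^ ν) / (R - R⁻¹) := by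
  have hR0 : 0 < R := by linarith
  set s := R ^ ν with hs
  have hs0 : 0 < s := Real.rpow_pos_of_pos hR0 ν
  have hs1 : 1 < s := Real.one_lt_rpow_iff_of_pos hR0 |>.mpr (Or.inl ⟨hR, hν0⟩)
  have hsR : s < R := by
    calc s = R ^ ν := rfl
    _ < R ^ (1:ℝ) := Real.rpow_lt_rpow_of_exponent_lt hR hν1
    _ = R := Real.rpow_one R
  have hinv : R⁻¹ ^ ν = s⁻¹ := by rw [hs, ← Real.inv_rpow hR0.le]
  have hRR : 0 < R - R⁻¹ := by
    have : R⁻¹ < 1 := by rw [inv_lt_one_iff₀]; right; exact hR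
    linarith
  have hR21 : 0 < R^2 - 1 := by nlinarith
  have hs21 : 0 < s^2 - 1 := by nlinarith
  have hR2s2 : 0 < R^2 - s^2 := by nlinarith
  have h1ν : 0 < 1 - ν := by linarith
  have hν1' : ν - 1 ≠ 0 := by intro h; rw [sub_eq_zero] at h; subst h; exact lt_irrefl 1 hν1
  have h1ν' : 1 - ν ≠ 0 := h1ν.ne'
  have hs2R2 : s^2 - R^2 ≠ 0 := by intro h; nlinarith [sq_nonneg (s-R)]
  set a := R*(s^2-1)/(s*(R^2-1)) with ha
  set b := (R^2-s^2)/(s*(R^2-1)) with hb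
  have hae : (R ^ ν - R⁻¹ ^ ν) / (R - R⁻¹) = a := by
    rw [← hs, hinv, ha]; rw [div_eq_div_iff (by linarith) (by positivity)]
    field_simp
  have hbe : (R * R⁻¹ ^ ν - R⁻¹ * R ^ ν) / (R - R⁻¹) = b := by
    rw [← hs, hinv, hb]; rw [div_eq_div_iff (by linarith) (by positivity)]
    field_simp
  have hapos : 0 < a := by rw [ha]; positivity
  have hbpos : 0 < b := by rw [hb]; positivity
  set tstar := ν*(R^2-s^2)/((1-ν)*R*(s^2-1)) with htstar
  have htspos : 0 < tstar := by rw [htstar]; positivity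
  set u := tstar ^ ν with hu
  set v := tstar ^ (1-ν) with hv
  have hupos : 0 < u := Real.rpow_pos_of_pos htspos ν
  have hvpos : 0 < v := Real.rpow_pos_of_pos htspos (1-ν)
  have huv : u * v = tstar := by
    rw [hu, hv, ← Real.rpow_add htspos]; norm_num
  have h2 : ((R ^ 2 : ℝ)) ^ ν = s ^ 2 := by
    have e : (R^2:ℝ) = R ^ ((2:ℕ):ℝ) := by rw [Real.rpow_natCast]
    rw [hs, e, ← Real.rpow_mul hR0.le, mul_comm, Real.rpow_mul hR0.le, Real.rpow_natCast]
  have hX : ((ν - 1) * (s^2 - 1)) / (ν * (s^2 - R^2)) = (R*tstar)⁻¹ := by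
    rw [htstar]
    field_simp
    ring
  have hXν : (((ν - 1) * (s^2 - 1)) / (ν * (s^2 - R^2))) ^ ν = (s * u)⁻¹ := by
    rw [hX, Real.inv_rpow (by positivity), Real.mul_rpow hR0.le htspos.le, ← hs, ← hu]
  have hKeq : Kconst (R^2) ν = b / ((1-ν) * u) := by
    rw [Kconst, h2, hXν, hb]
    field_simp
    ring
  have hamgm := Real.geom_mean_le_arith_mean2_weighted hν0.le h1ν.le ht.le htspos.le
    (by ring : ν + (1 - ν) = 1)
  rw [hae, hbe, hKeq]
  calc b / ((1-ν)*u) * t^ν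
      = (b / ((1-ν) * tstar)) * (t^ν * v) := by rw [← huv]; field_simp
    _ ≤ (b / ((1-ν) * tstar)) * (ν*t + (1-ν)*tstar) := by
        apply mul_le_mul_of_nonneg_left hamgm (by positivity)
    _ = a*t + b := by
        rw [htstar, ha, hb]
        field_simp

lemma my_isUnit_of_mul_self {M : Type*} [Monoid M] {a : M} (h : IsUnit (a * a)) : IsUnit a := by
  obtain ⟨u, hu⟩ := h
  have h1 : a * (a * ↑u⁻¹) = 1 := by rw [← mul_assoc, ← hu]; exact Units.mul_inv _
  have h2 : (↑u⁻¹ * a) * a = 1 := by rw [mul_assoc, ← hu]; exact Units.inv_mul _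
  have h3 : (↑u⁻¹ * a : M) = a * ↑u⁻¹ := by
    calc (↑u⁻¹ * a : M) = (↑u⁻¹ * a) * (a * (a * ↑u⁻¹)) := by rw [h1, mul_one]
    _ = ((↑u⁻¹ * a) * a) * (a * ↑u⁻¹) := by simp only [mul_assoc]
    _ = a * ↑u⁻¹ := by rw [h2, one_mul]
  exact ⟨⟨a, a * ↑u⁻¹, h1, by rw [← h3]; exact h2⟩, rfl⟩

lemma sqrt_inv_facts (X : H →L[ℂ] H) (hX : 0 ≤ X) (hXu : IsUnit X) :
    CFC.sqrt (Ring.inverse X) * CFC.sqrt X = 1 ∧ CFC.sqrt X * CFC.sqrt (Ring.inverse X) = 1 ∧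
      0 ≤ Ring.inverse X := by
  have hsq : CFC.sqrt X * CFC.sqrt X = X := CFC.sqrt_mul_sqrt_self X
  have hTu : IsUnit (CFC.sqrt X) := my_isUnit_of_mul_self (by rw [hsq]; exact hXu)
  obtain ⟨V, hVval⟩ := hTu
  have hVV : ((V * V : _ˣ) : H →L[ℂ] H) = X := by rw [Units.val_mul, hVval, hsq]
  have hinvX : Ring.inverse X = ((V*V)⁻¹ : _ˣ) := by rw [← hVV, Ring.inverse_unit]
  have hVinv_nonneg : 0 ≤ (↑V⁻¹ : H →L[ℂ] H) :=
    CFC.inv_nonneg_of_nonneg V (hVval ▸ CFC.sqrt_nonneg _)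
  have hsqrtinv : CFC.sqrt (Ring.inverse X) = ↑V⁻¹ := by
    apply CFC.sqrt_unique ?_ hVinv_nonneg
    rw [hinvX, mul_inv_rev, Units.val_mul]
  refine ⟨?_, ?_, ?_⟩
  · rw [hsqrtinv, ← hVval, Units.inv_mul]
  · rw [hsqrtinv, ← hVval, Units.mul_inv]
  · rw [hinvX]; exact CFC.inv_nonneg_of_nonneg (V*V) (hVV ▸ hX)

lemma wgm_nonneg (ν : ℝ) (X Y : H →L[ℂ] H) : 0 ≤ wgm ν X Y :=
  IsSelfAdjoint.conjugate_nonneg CFC.rpow_nonneg (IsSelfAdjoint.of_nonneg (CFC.sqrt_nonneg _))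

lemma rdist_facts [Nontrivial H] (A B : H →L[ℂ] H) (hA0 : 0 ≤ A) (hAu : IsUnit A)
    (hB0 : 0 ≤ B) (hBu : IsUnit B) :
    1 ≤ Rdist A B ∧ B ≤ Rdist A B • A ∧ (Rdist A B)⁻¹ • A ≤ B := by
  rw [Rdist]
  haveI : Nontrivial (H →L[ℂ] H) := by
    obtain ⟨x, hx⟩ := exists_ne (0 : H)
    exact ⟨1, 0, fun h => hx (by simpa using DFunLike.congr_fun h x)⟩
  set R := max (spectralRadius ℂ (Ring.inverse A * B)).toReal
      (spectralRadius ℂ (Ring.inverse B * A)).toReal with hR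
  obtain ⟨hST, hTS, hInvA0⟩ := sqrt_inv_facts A hA0 hAu
  set S := CFC.sqrt (Ring.inverse A) with hS
  set T := CFC.sqrt A with hT
  have hSS : S * S = Ring.inverse A := CFC.sqrt_mul_sqrt_self _ hInvA0
  have hTT : T * T = A := CFC.sqrt_mul_sqrt_self _ hA0
  have hSsa : IsSelfAdjoint S := IsSelfAdjoint.of_nonneg (CFC.sqrt_nonneg _)
  have hTsa : IsSelfAdjoint T := IsSelfAdjoint.of_nonneg (CFC.sqrt_nonneg _)
  set U : (H →L[ℂ] H)ˣ := ⟨T, S, hTS, hST⟩ with hU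
  have hUval : (↑U : H →L[ℂ] H) = T := rfl
  have hUinv : (↑U⁻¹ : H →L[ℂ] H) = S := rfl
  set C := S * B * S with hC
  have hC0 : 0 ≤ C := IsSelfAdjoint.conjugate_nonneg hB0 hSsa
  have hCsa : IsSelfAdjoint C := IsSelfAdjoint.of_nonneg hC0
  have hCconj : Ring.inverse A * B = ↑U⁻¹ * C * ↑U := by
    rw [hUinv, hUval, hC, ← hSS]
    calc S * S * B = (S * S * B) * (S * T) := by rw [hST, mul_one]
    _ = S * (S * B * S) * T := by simp only [mul_assoc]
  have hrC : (spectralRadius ℂ (Ring.inverse A * B)) = spectralRadius ℂ C := by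
    unfold spectralRadius
    rw [hCconj, spectrum.units_conjugate']
  have hnormC : ‖C‖ ≤ R := by
    have := hCsa.spectralRadius_eq_nnnorm
    have hval : (spectralRadius ℂ (Ring.inverse A * B)).toReal = ‖C‖ := by
      rw [hrC, this]; rfl
    rw [← hval]; exact le_max_left _ _
  obtain ⟨_, _, hInvB0⟩ := sqrt_inv_facts B hB0 hBu
  set Cinv := T * Ring.inverse B * T with hCinv
  have hCinv0 : 0 ≤ Cinv := IsSelfAdjoint.conjugate_nonneg hInvB0 hTsa
  have hCinvsa : IsSelfAdjoint Cinv := IsSelfAdjoint.of_nonneg hCinv0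
  have hCCinv : C * Cinv = 1 := by
    rw [hC, hCinv]
    calc S * B * S * (T * Ring.inverse B * T)
        = S * (B * ((S * T) * Ring.inverse B)) * T := by simp only [mul_assoc]
    _ = S * (B * Ring.inverse B) * T := by rw [hST, one_mul]
    _ = S * T := by rw [Ring.mul_inverse_cancel B hBu, mul_one]
    _ = 1 := hST
  have hCinvC : Cinv * C = 1 := by
    rw [hC, hCinv]
    calc T * Ring.inverse B * T * (S * B * S)
        = T * (Ring.inverse B * ((T * S) * B)) * S := by simp only [mul_assoc]
    _ = T * (Ring.inverse B * B) * S := by rw [hTS, one_mul]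
    _ = T * S := by rw [Ring.inverse_mul_cancel B hBu, mul_one]
    _ = 1 := hTS
  have hCinvconj : Ring.inverse B * A = ↑U⁻¹ * Cinv * ↑U := by
    rw [hUinv, hUval, hCinv, ← hTT]
    calc Ring.inverse B * (T * T) = (S * T) * Ring.inverse B * (T * T) := by rw [hST, one_mul]
    _ = S * (T * Ring.inverse B * T) * T := by simp only [mul_assoc]
  have hrCinv : (spectralRadius ℂ (Ring.inverse B * A)) = spectralRadius ℂ Cinv := by
    unfold spectralRadius
    rw [hCinvconj, spectrum.units_conjugate']
  have hnormCinv : ‖Cinv‖ ≤ R := by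
    have := hCinvsa.spectralRadius_eq_nnnorm
    have hval : (spectralRadius ℂ (Ring.inverse B * A)).toReal = ‖Cinv‖ := by
      rw [hrCinv, this]; rfl
    rw [← hval]; exact le_max_right _ _
  have hR0 : 0 ≤ R := le_trans ENNReal.toReal_nonneg (le_max_left _ _)
  have hR1 : 1 ≤ R := by
    have h1 : (1:ℝ) = ‖(1 : H →L[ℂ] H)‖ := norm_one.symm
    have h2 : ‖(1 : H →L[ℂ] H)‖ ≤ ‖C‖ * ‖Cinv‖ := by rw [← hCCinv]; exact norm_mul_le _ _
    have h3 : ‖C‖ * ‖Cinv‖ ≤ R * R := by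
      apply mul_le_mul hnormC hnormCinv (norm_nonneg _) hR0
    nlinarith [hR0]
  have hRpos : 0 < R := by linarith
  have hup : C ≤ algebraMap ℝ _ R := (CStarAlgebra.norm_le_iff_le_algebraMap C hR0 hC0).mp hnormC
  have hupinv : Cinv ≤ algebraMap ℝ _ R :=
    (CStarAlgebra.norm_le_iff_le_algebraMap Cinv hR0 hCinv0).mp hnormCinv
  -- lower bound : algebraMap R⁻¹ ≤ C
  set WC : (H →L[ℂ] H)ˣ := ⟨C, Cinv, hCCinv, hCinvC⟩ with hWC
  set uR : (H →L[ℂ] H)ˣ := Units.map (algebraMap ℝ (H →L[ℂ] H) : ℝ →* (H →L[ℂ] H))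
      (Units.mk0 R hRpos.ne') with huR
  have huRval : (↑uR : H →L[ℂ] H) = algebraMap ℝ _ R := rfl
  have huRinv : (↑uR⁻¹ : H →L[ℂ] H) = algebraMap ℝ _ R⁻¹ := by
    have e : uR⁻¹ = Units.map (algebraMap ℝ (H →L[ℂ] H) : ℝ →* (H →L[ℂ] H))
        ((Units.mk0 R hRpos.ne')⁻¹) := by rw [huR, ← map_inv]
    rw [e]
    simp
  have hlow : algebraMap ℝ _ R⁻¹ ≤ C := by
    have := CStarAlgebra.inv_le_inv (a := WC⁻¹) (b := uR) hCinv0 (by rw [huRval]; exact hupinv)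
    rw [inv_inv] at this
    rw [← huRinv]
    exact this
  refine ⟨hR1, ?_, ?_⟩
  · have := IsSelfAdjoint.conjugate_le_conjugate hup hTsa
    calc B = T * C * T := by
          rw [hC]
          calc B = (T * S) * B * (S * T) := by rw [hTS, hST, one_mul, mul_one]
          _ = T * (S * B * S) * T := by simp only [mul_assoc]
    _ ≤ T * algebraMap ℝ _ R * T := this
    _ = R • A := by
        rw [Algebra.algebraMap_eq_smul_one, mul_smul_comm, smul_mul_assoc, mul_one, hTT]
  · have := IsSelfAdjoint.conjugate_le_conjugate hlow hTsa
    calc R⁻¹ • A = T * algebraMap ℝ _ R⁻¹ * T := by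
          rw [Algebra.algebraMap_eq_smul_one, mul_smul_comm, smul_mul_assoc, mul_one, hTT]
    _ ≤ T * C * T := this
    _ = B := by
        rw [hC]
        calc T * (S * B * S) * T = (T * S) * B * (S * T) := by simp only [mul_assoc]
        _ = B := by rw [hTS, hST, one_mul, mul_one]


lemma core_bounds (X Y : H →L[ℂ] H) (hX0 : 0 ≤ X) (hXu : IsUnit X) (hY0 : 0 ≤ Y)
    {R ν : ℝ} (hR : 1 < R) (hν0 : 0 < ν) (hν1 : ν < 1)
    (h1 : R⁻¹ • X ≤ Y) (h2 : Y ≤ R • X) :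
    (((R ^ ν - R⁻¹ ^ ν) / (R - R⁻¹)) • Y + ((R * R⁻¹ ^ ν - R⁻¹ * R ^ ν) / (R - R⁻¹)) • X
        ≤ wgm ν X Y) ∧
    (Kconst (R ^ 2) ν • wgm ν X Y ≤
      ((R ^ ν - R⁻¹ ^ ν) / (R - R⁻¹)) • Y + ((R * R⁻¹ ^ ν - R⁻¹ * R ^ ν) / (R - R⁻¹)) • X) := by
  set aa := (R ^ ν - R⁻¹ ^ ν) / (R - R⁻¹) with haa
  set bb := (R * R⁻¹ ^ ν - R⁻¹ * R ^ ν) / (R - R⁻¹) with hbb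
  have hm : (0:ℝ) < R⁻¹ := by positivity
  have hmM : R⁻¹ < R := by
    have h' : R⁻¹ < 1 := by rw [inv_lt_one_iff₀]; right; exact hR
    linarith
  obtain ⟨hST, hTS, hInv0⟩ := sqrt_inv_facts X hX0 hXu
  set S := CFC.sqrt (Ring.inverse X) with hS
  set T := CFC.sqrt X with hT
  have hTT : T * T = X := CFC.sqrt_mul_sqrt_self _ hX0
  have hSsa : IsSelfAdjoint S := IsSelfAdjoint.of_nonneg (CFC.sqrt_nonneg _)
  have hTsa : IsSelfAdjoint T := IsSelfAdjoint.of_nonneg (CFC.sqrt_nonneg _)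
  set Z := S * Y * S with hZ
  have hZ0 : 0 ≤ Z := IsSelfAdjoint.conjugate_nonneg hY0 hSsa
  have hZsa : IsSelfAdjoint Z := IsSelfAdjoint.of_nonneg hZ0
  have hSXS : S * X * S = 1 := by
    rw [← hTT]
    calc S * (T * T) * S = (S * T) * (T * S) := by simp only [mul_assoc]
    _ = 1 := by rw [hST, hTS, one_mul]
  have hTZT : T * Z * T = Y := by
    rw [hZ]
    calc T * (S * Y * S) * T = (T * S) * Y * (S * T) := by simp only [mul_assoc]
    _ = Y := by rw [hTS, hST, one_mul, mul_one]
  have h1' : algebraMap ℝ _ R⁻¹ ≤ Z := by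
    have hc := IsSelfAdjoint.conjugate_le_conjugate h1 hSsa
    calc algebraMap ℝ _ R⁻¹ = S * (R⁻¹ • X) * S := by
          rw [mul_smul_comm, smul_mul_assoc, hSXS, Algebra.algebraMap_eq_smul_one]
    _ ≤ S * Y * S := hc
  have h2' : Z ≤ algebraMap ℝ _ R := by
    have hc := IsSelfAdjoint.conjugate_le_conjugate h2 hSsa
    calc Z ≤ S * (R • X) * S := hc
    _ = algebraMap ℝ _ R := by
          rw [mul_smul_comm, smul_mul_assoc, hSXS, Algebra.algebraMap_eq_smul_one]
  have hspec : ∀ x ∈ spectrum ℝ Z, x ∈ Set.Icc R⁻¹ R := by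
    have hl := (algebraMap_le_iff_le_spectrum (r := R⁻¹) (a := Z) (ha := hZsa)).mp h1'
    have hu := (le_algebraMap_iff_spectrum_le (r := R) (a := Z) (ha := hZsa)).mp h2'
    exact fun x hx => ⟨hl x hx, hu x hx⟩
  have hcont1 : ContinuousOn (fun t : ℝ => t ^ ν) (spectrum ℝ Z) :=
    ContinuousOn.rpow_const continuousOn_id (fun x _ => Or.inr hν0.le)
  have e_rpow : cfc (fun t : ℝ => t ^ ν) Z = CFC.rpow Z ν := by
    have e0 : CFC.rpow Z ν = cfc (fun x : ℝ≥0 => x ^ ν) Z := rfl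
    rw [e0, cfc_nnreal_eq_real _ _ hZ0]
    apply cfc_congr
    intro x hx
    have hx0 : (0:ℝ) ≤ x := le_trans hm.le (hspec x hx).1
    simp only [NNReal.coe_rpow, Real.coe_toNNReal x hx0]
  have e_affine : cfc (fun t : ℝ => aa * t + bb) Z = aa • Z + bb • 1 := by
    rw [cfc_add Z (fun t => aa * t) (fun _ => bb) (by fun_prop) (by fun_prop),
      cfc_const_mul_id aa Z hZsa, cfc_const bb Z hZsa, Algebra.algebraMap_eq_smul_one]
  have first : aa • Z + bb • 1 ≤ cfc (fun t : ℝ => t ^ ν) Z := by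
    rw [← e_affine]
    exact cfc_mono (fun x hx => chord_le hm hmM hν0.le hν1.le (hspec x hx)) (by fun_prop) hcont1
  have second : Kconst (R^2) ν • cfc (fun t : ℝ => t ^ ν) Z ≤ aa • Z + bb • 1 := by
    have e2 : cfc (fun t : ℝ => Kconst (R^2) ν * t ^ ν) Z
        = Kconst (R^2) ν • cfc (fun t : ℝ => t ^ ν) Z :=
      cfc_const_mul (Kconst (R^2) ν) (fun t : ℝ => t ^ ν) Z hcont1
    rw [← e2, ← e_affine]
    exact cfc_mono (fun x hx => kan_le hR hν0 hν1 (lt_of_lt_of_le hm (hspec x hx).1))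
      (continuousOn_const.mul hcont1) (by fun_prop)
  have hexp : T * (aa • Z + bb • 1) * T = aa • Y + bb • X := by
    rw [mul_add, add_mul, mul_smul_comm, mul_smul_comm, smul_mul_assoc, smul_mul_assoc,
      mul_one, hTZT, hTT]
  have hwgm : wgm ν X Y = T * CFC.rpow Z ν * T := rfl
  constructor
  · have hc := IsSelfAdjoint.conjugate_le_conjugate first hTsa
    calc aa • Y + bb • X = T * (aa • Z + bb • 1) * T := hexp.symm
    _ ≤ T * cfc (fun t : ℝ => t ^ ν) Z * T := hc
    _ = wgm ν X Y := by rw [e_rpow, hwgm]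
  · have hc := IsSelfAdjoint.conjugate_le_conjugate second hTsa
    calc Kconst (R^2) ν • wgm ν X Y
        = T * (Kconst (R^2) ν • cfc (fun t : ℝ => t ^ ν) Z) * T := by
          rw [hwgm, e_rpow, mul_smul_comm, smul_mul_assoc]
    _ ≤ T * (aa • Z + bb • 1) * T := hc
    _ = aa • Y + bb • X := hexp

/-- `K(R(A,B)², ν) • (Φ(A) ♯ν Φ(B)) ≤ Φ(A ♯ν B)` for a unital positive linear map. -/
theorem stmt_4 (Φ : (H →L[ℂ] H) →ₗ[ℂ] (H →L[ℂ] H))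
    (hΦ1 : Φ 1 = 1) (hΦpos : ∀ T : H →L[ℂ] H, 0 ≤ T → 0 ≤ Φ T)
    (A B : H →L[ℂ] H) (hA : IsPosDef A) (hB : IsPosDef B)
    (ν : ℝ) (hν : ν ∈ Set.Ioc (0 : ℝ) 1) :
    Kconst ((Rdist A B) ^ 2) ν • wgm ν (Φ A) (Φ B) ≤ Φ (wgm ν A B) := by
  obtain ⟨hν0, hν1⟩ := hν
  have hA0 : 0 ≤ A := (nonneg_iff_isPositive A).mpr hA.1
  have hB0 : 0 ≤ B := (nonneg_iff_isPositive B).mpr hB.1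
  have hΦmono : ∀ {X Y : H →L[ℂ] H}, X ≤ Y → Φ X ≤ Φ Y := by
    intro X Y h
    have h2 := hΦpos (Y - X) (sub_nonneg.mpr h)
    rw [map_sub] at h2
    exact sub_nonneg.mp h2
  have hΦwgm : 0 ≤ Φ (wgm ν A B) := hΦpos _ (wgm_nonneg ν A B)
  rcases subsingleton_or_nontrivial H with hsub | hnt
  · haveI : Subsingleton (H →L[ℂ] H) :=
      ⟨fun f g => ContinuousLinearMap.ext fun x => Subsingleton.elim _ _⟩
    exact le_of_eq (Subsingleton.elim _ _)
  set R := Rdist A B with hRdef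
  obtain ⟨hR1, hBA, hAB⟩ := rdist_facts A B hA0 hA.2 hB0 hB.2
  rw [← hRdef] at hR1 hBA hAB
  rcases eq_or_lt_of_le hν1 with hν1' | hν1'
  · have hK : Kconst (R ^ 2) ν = 0 := by
      rw [hν1']; simp [Kconst, Real.rpow_one]
    rw [hK, zero_smul]
    exact hΦwgm
  rcases eq_or_lt_of_le hR1 with hR1' | hR1'
  · have hK : Kconst (R ^ 2) ν = 0 := by
      rw [← hR1']; simp [Kconst, Real.one_rpow]
    rw [hK, zero_smul]
    exact hΦwgm
  have hΦA0 : 0 ≤ Φ A := hΦpos A hA0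
  have hΦB0 : 0 ≤ Φ B := hΦpos B hB0
  have hΦsmul : ∀ (r : ℝ) (X : H →L[ℂ] H), Φ (r • X) = r • Φ X := fun r X => by
    rw [← algebraMap_smul ℂ r X, map_smul, algebraMap_smul]
  have hAsa : IsSelfAdjoint A := .of_nonneg hA0
  obtain ⟨ε, hε, hεA⟩ := (CFC.exists_pos_algebraMap_le_iff (a := A) hAsa).mpr
    (fun x hx => lt_of_le_of_ne (spectrum_nonneg_of_nonneg hA0 hx)
      (fun h => spectrum.zero_notMem ℝ hA.2 (h ▸ hx)))
  have hΦε : algebraMap ℝ (H →L[ℂ] H) ε ≤ Φ A := by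
    have h3 := hΦmono hεA
    rwa [Algebra.algebraMap_eq_smul_one, hΦsmul, hΦ1,
      ← Algebra.algebraMap_eq_smul_one] at h3
  have hΦAu : IsUnit (Φ A) := by
    refine CStarAlgebra.isUnit_of_le _ hΦε (And.symm ⟨?_, ?_⟩)
    · exact (isUnit_iff_ne_zero.mpr hε.ne').map (algebraMap ℝ (H →L[ℂ] H))
    · rw [Algebra.algebraMap_eq_smul_one]
      exact smul_nonneg hε.le zero_le_one
  have hΦBA : Φ B ≤ R • Φ A := by
    have h4 := hΦmono hBA; rwa [hΦsmul] at h4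
  have hΦAB : R⁻¹ • Φ A ≤ Φ B := by
    have h5 := hΦmono hAB; rwa [hΦsmul] at h5
  obtain ⟨hlow, -⟩ := core_bounds A B hA0 hA.2 hB0 hR1' hν0 hν1' hAB hBA
  obtain ⟨-, hup⟩ := core_bounds (Φ A) (Φ B) hΦA0 hΦAu hΦB0 hR1' hν0 hν1' hΦAB hΦBA
  calc Kconst (R ^ 2) ν • wgm ν (Φ A) (Φ B)
      ≤ ((R ^ ν - R⁻¹ ^ ν) / (R - R⁻¹)) • Φ B
        + ((R * R⁻¹ ^ ν - R⁻¹ * R ^ ν) / (R - R⁻¹)) • Φ A := hup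
    _ = Φ (((R ^ ν - R⁻¹ ^ ν) / (R - R⁻¹)) • B
        + ((R * R⁻¹ ^ ν - R⁻¹ * R ^ ν) / (R - R⁻¹)) • A) := by
        rw [map_add, hΦsmul, hΦsmul]
    _ ≤ Φ (wgm ν A B) := hΦmono hlow
end

section
/- Let Φ be a unital positive linear map on B(H) and let A, B be positive definite operators with R = R(A,B) = max{r(A⁻¹B), r(B⁻¹A)}. Then ((1+R²)²/(4R))·Φ(B)Φ(A)⁻¹Φ(B) ≥ Φ(BA⁻¹B). -/
set_option synthInstance.maxHeartbeats 400000
set_option maxHeartbeats 800000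

open scoped NNReal ENNReal
open ContinuousLinearMap Filter

variable {H : Type*} [NormedAddCommGroup H] [InnerProductSpace ℂ H] [CompleteSpace H]

section AuxLemmas

private lemma aux_smul_nonneg {c : ℝ} {T : H →L[ℂ] H} (hc : 0 ≤ c) (hT : 0 ≤ T) : 0 ≤ c • T := by
  have hsa : IsSelfAdjoint T := .of_nonneg hT
  have h2 : cfc (fun x : ℝ => c • (id x : ℝ)) T = c • T := by
    rw [cfc_smul c (id : ℝ → ℝ) T, cfc_id ℝ T]
  rw [← h2]
  exact cfc_nonneg fun x hx => smul_nonneg hc (spectrum_nonneg_of_nonneg hT hx)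

private lemma aux_smul_mono {c : ℝ} (hc : 0 ≤ c) {S T : H →L[ℂ] H} (h : S ≤ T) :
    c • S ≤ c • T := by
  rw [← sub_nonneg, ← smul_sub]
  exact aux_smul_nonneg hc (sub_nonneg.mpr h)

private lemma aux_isUnit_sqrt {A : H →L[ℂ] H} (h0 : 0 ≤ A) (hu : IsUnit A) :
    IsUnit (CFC.sqrt A) := by
  have hss : CFC.sqrt A * CFC.sqrt A = A := CFC.sqrt_mul_sqrt_self A h0
  have h1 : CFC.sqrt A * (CFC.sqrt A * Ring.inverse A) = 1 := by
    rw [← mul_assoc, hss, Ring.mul_inverse_cancel A hu]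
  have h2 : (Ring.inverse A * CFC.sqrt A) * CFC.sqrt A = 1 := by
    rw [mul_assoc, hss, Ring.inverse_mul_cancel A hu]
  exact ⟨⟨CFC.sqrt A, CFC.sqrt A * Ring.inverse A, h1,
    by rw [← left_inv_eq_right_inv h2 h1]; exact h2⟩, rfl⟩

private lemma aux_sa_inverse {s : H →L[ℂ] H} (hs : IsSelfAdjoint s) (hu : IsUnit s) :
    IsSelfAdjoint (Ring.inverse s) := by
  have h1 : s * Ring.inverse s = 1 := Ring.mul_inverse_cancel s hu
  have h3 : star (Ring.inverse s) * s = 1 := by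
    have := congrArg star h1
    rwa [star_mul, hs.star_eq, star_one] at this
  exact left_inv_eq_right_inv h3 h1

private lemma aux_ring_inverse_eq {X Y : H →L[ℂ] H} (hu : IsUnit X) (h1 : X * Y = 1) :
    Ring.inverse X = Y := by
  calc Ring.inverse X = Ring.inverse X * (X * Y) := by rw [h1, mul_one]
  _ = (Ring.inverse X * X) * Y := by rw [mul_assoc]
  _ = Y := by rw [Ring.inverse_mul_cancel X hu, one_mul]

private lemma aux_norm_le_radius [Nontrivial H] {Y : H →L[ℂ] H} {z : ℂ}
    (hz : z ∈ spectrum ℂ Y) : ‖z‖ ≤ (spectralRadius ℂ Y).toReal := by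
  have h1 : (‖z‖₊ : ℝ≥0∞) ≤ spectralRadius ℂ Y := le_iSup₂ (f := fun k _ => (‖k‖₊ : ℝ≥0∞)) z hz
  have h2 : spectralRadius ℂ Y ≠ ⊤ :=
    ((spectrum.spectralRadius_le_nnnorm Y).trans_lt ENNReal.coe_lt_top).ne
  have := ENNReal.toReal_mono h2 h1
  simpa using this

private lemma aux_real_smul_eq (k : ℝ) (Y : H →L[ℂ] H) : k • Y = (k : ℂ) • Y :=
  (algebraMap_smul ℂ k Y).symm

private lemma aux_add_inv_le {X : H →L[ℂ] H} {R : ℝ} (hR : 1 ≤ R) (h0 : 0 ≤ X) (hu : IsUnit X)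
    (hspec : spectrum ℝ X ⊆ Set.Icc R⁻¹ R) :
    X + Ring.inverse X ≤ (R + R⁻¹) • (1 : H →L[ℂ] H) := by
  have hR0 : (0:ℝ) < R := lt_of_lt_of_le one_pos hR
  have hsa : IsSelfAdjoint X := .of_nonneg h0
  have hpos : ∀ x ∈ spectrum ℝ X, 0 < x := fun x hx =>
    lt_of_lt_of_le (by positivity) (hspec hx).1
  have hne : ∀ x ∈ spectrum ℝ X, (id x : ℝ) ≠ 0 := fun x hx => (hpos x hx).ne'
  have hcont : ContinuousOn (fun x : ℝ => x⁻¹) (spectrum ℝ X) :=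
    continuousOn_inv₀.mono fun x hx => (hpos x hx).ne'
  have hinv : cfc (fun x : ℝ => x⁻¹) X = Ring.inverse X := by
    have := cfc_inv (id : ℝ → ℝ) X hne continuousOn_id hsa
    simpa [cfc_id ℝ X hsa] using this
  have hXeq : cfc (fun x : ℝ => x) X = X := cfc_id' ℝ X hsa
  have key : cfc (fun x : ℝ => x + x⁻¹) X ≤ cfc (fun _ : ℝ => R + R⁻¹) X := by
    refine cfc_mono (fun x hx => ?_) (continuousOn_id.add hcont) (continuousOn_const)
    obtain ⟨hx1, hx2⟩ := hspec hx
    have hx0 : 0 < x := hpos x hx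
    have e1 : x * x⁻¹ = 1 := mul_inv_cancel₀ hx0.ne'
    have e2 : R * R⁻¹ = 1 := mul_inv_cancel₀ hR0.ne'
    nlinarith [mul_nonneg (sub_nonneg.mpr hx2) (sub_nonneg.mpr hx1),
      mul_pos hx0 hR0, inv_pos.mpr hx0, inv_pos.mpr hR0]
  rwa [cfc_add X (fun x : ℝ => x) (fun x : ℝ => x⁻¹) continuousOn_id hcont, hXeq, hinv,
    cfc_const (R + R⁻¹) X hsa, Algebra.algebraMap_eq_smul_one] at key

private lemma aux_quad {Y : H →L[ℂ] H} (hY : 0 ≤ Y) (k : ℝ) :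
    k • Y ≤ (k ^ 2 / 4) • (Y * Y) + 1 := by
  have hsa : IsSelfAdjoint Y := .of_nonneg hY
  have hZ : IsSelfAdjoint ((k / 2) • Y - 1) := by
    refine IsSelfAdjoint.sub ?_ (by simp [IsSelfAdjoint])
    rw [aux_real_smul_eq, IsSelfAdjoint, star_smul, hsa.star_eq]
    norm_num
  have h := hZ.sq_nonneg
  have expand : ((k / 2) • Y - 1) ^ 2 = (k ^ 2 / 4) • (Y * Y) - k • Y + 1 := by
    simp only [aux_real_smul_eq]
    push_cast
    rw [sq, sub_mul, mul_sub, mul_sub, one_mul, one_mul, mul_one, smul_mul_smul_comm]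
    match_scalars <;> ring
  rw [expand] at h
  rw [← sub_nonneg]
  have e2 : (k ^ 2 / 4) • (Y * Y) + 1 - k • Y = (k ^ 2 / 4) • (Y * Y) - k • Y + 1 := by abel
  rw [e2]
  exact h

end AuxLemmas

/-- `Φ(B A⁻¹ B) ≤ ((1+R²)²/(4R)) • Φ(B) Φ(A)⁻¹ Φ(B)` where `R = R(A,B)`. -/
theorem stmt_6 (Φ : (H →L[ℂ] H) →ₗ[ℂ] (H →L[ℂ] H))
    (hΦ1 : Φ 1 = 1) (hΦpos : ∀ T : H →L[ℂ] H, 0 ≤ T → 0 ≤ Φ T)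
    (A B : H →L[ℂ] H) (hA : IsPosDef A) (hB : IsPosDef B) :
    Φ (B * Ring.inverse A * B) ≤
      ((1 + (Rdist A B) ^ 2) ^ 2 / (4 * Rdist A B)) •
        (Φ B * Ring.inverse (Φ A) * Φ B) := by
  rcases subsingleton_or_nontrivial H with hH | hH
  · exact le_of_eq (Subsingleton.elim _ _)
  have hMnt : Nontrivial (H →L[ℂ] H) := by
    obtain ⟨x, hx⟩ := exists_ne (0 : H)
    exact ⟨1, 0, fun h => hx (by simpa using DFunLike.congr_fun h x)⟩
  set R := Rdist A B with hRdef
  have hA0 : (0 : H →L[ℂ] H) ≤ A := (nonneg_iff_isPositive A).mpr hA.1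
  have hB0 : (0 : H →L[ℂ] H) ≤ B := (nonneg_iff_isPositive B).mpr hB.1
  have hiA : A * Ring.inverse A = 1 := Ring.mul_inverse_cancel A hA.2
  have hiA' : Ring.inverse A * A = 1 := Ring.inverse_mul_cancel A hA.2
  have hiB : B * Ring.inverse B = 1 := Ring.mul_inverse_cancel B hB.2
  have hiB' : Ring.inverse B * B = 1 := Ring.inverse_mul_cancel B hB.2
  -- Step 1 : 1 ≤ R
  have hTu : (Ring.inverse A * B) * (Ring.inverse B * A) = 1 := by
    rw [mul_assoc, ← mul_assoc B (Ring.inverse B) A, hiB, one_mul, hiA']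
  have hT'u : (Ring.inverse B * A) * (Ring.inverse A * B) = 1 := by
    rw [mul_assoc, ← mul_assoc A (Ring.inverse A) B, hiA, one_mul, hiB']
  let uT : (H →L[ℂ] H)ˣ := ⟨Ring.inverse A * B, Ring.inverse B * A, hTu, hT'u⟩
  obtain ⟨z, hz⟩ := spectrum.nonempty (Ring.inverse A * B)
  have hz0 : z ≠ 0 := fun h => spectrum.zero_notMem ℂ uT.isUnit (h ▸ hz)
  have hzinv : z⁻¹ ∈ spectrum ℂ (Ring.inverse B * A) := by
    have h' := (spectrum.inv_mem_iff (r := Units.mk0 z hz0) (a := uT)).mp hz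
    have h'' : z⁻¹ ∈ spectrum ℂ ((uT⁻¹ : (H →L[ℂ] H)ˣ) : H →L[ℂ] H) := by
      simpa only [Units.val_inv_eq_inv_val, Units.val_mk0] using h'
    exact h''
  have h1 : ‖z‖ ≤ R := le_trans (aux_norm_le_radius hz) (le_max_left _ _)
  have h2 : ‖z⁻¹‖ ≤ R := le_trans (aux_norm_le_radius hzinv) (le_max_right _ _)
  have hz1 : ‖z‖ * ‖z⁻¹‖ = 1 := by
    rw [norm_inv]
    exact mul_inv_cancel₀ (norm_ne_zero_iff.mpr hz0)
  have hR0 : (0:ℝ) ≤ R := le_trans ENNReal.toReal_nonneg (le_max_left _ _)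
  have hR1 : (1:ℝ) ≤ R := by nlinarith [norm_nonneg z, norm_nonneg z⁻¹]
  have hRpos : (0:ℝ) < R := lt_of_lt_of_le one_pos hR1
  -- square root of B
  set s := CFC.sqrt B with hsdef
  have hs0 : (0 : H →L[ℂ] H) ≤ s := CFC.sqrt_nonneg (a := B)
  have hssa : IsSelfAdjoint s := .of_nonneg hs0
  have hss : s * s = B := CFC.sqrt_mul_sqrt_self B hB0
  have hsu : IsUnit s := aux_isUnit_sqrt hB0 hB.2
  set v := Ring.inverse s with hvdef
  have hsv : s * v = 1 := Ring.mul_inverse_cancel s hsu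
  have hvs : v * s = 1 := Ring.inverse_mul_cancel s hsu
  have hvsa : IsSelfAdjoint v := aux_sa_inverse hssa hsu
  have hvu : IsUnit v := ⟨⟨v, s, hvs, hsv⟩, rfl⟩
  have hvv : v * v = Ring.inverse B := by
    refine (aux_ring_inverse_eq hB.2 ?_).symm
    rw [← hss, mul_assoc, ← mul_assoc s v v, hsv, one_mul, hsv]
  set X := v * A * v with hXdef
  have hX0 : (0 : H →L[ℂ] H) ≤ X := by
    have := star_left_conjugate_le_conjugate hA0 v
    simpa [hvsa.star_eq] using this
  have hXu : IsUnit X := (hvu.mul hA.2).mul hvu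
  have hXinv : Ring.inverse X = s * Ring.inverse A * s := by
    refine aux_ring_inverse_eq hXu ?_
    have e : (v * A * v) * (s * Ring.inverse A * s) =
        v * (A * ((v * s) * Ring.inverse A)) * s := by noncomm_ring
    rw [hXdef, e, hvs, one_mul, ← mul_assoc, mul_assoc v A (Ring.inverse A), hiA, mul_one, hvs]
  -- spectra identification
  have husval : (hsu.unit : H →L[ℂ] H) = s := hsu.unit_spec
  have husinv : ((hsu.unit⁻¹ : (H →L[ℂ] H)ˣ) : H →L[ℂ] H) = v := by
    rw [hvdef]
    exact (aux_ring_inverse_eq hsu hsu.mul_val_inv).symm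
  have huBval : (hB.2.unit : H →L[ℂ] H) = B := hB.2.unit_spec
  have huBinv : ((hB.2.unit⁻¹ : (H →L[ℂ] H)ˣ) : H →L[ℂ] H) = Ring.inverse B :=
    (aux_ring_inverse_eq hB.2 hB.2.mul_val_inv).symm
  have hspecX : spectrum ℂ X = spectrum ℂ (Ring.inverse B * A) := by
    have e1 : X = ↑hsu.unit⁻¹ * (A * Ring.inverse B) * ↑hsu.unit := by
      rw [husval, husinv, ← hvv, hXdef]
      have e : v * (A * (v * v)) * s = v * A * v * (v * s) := by noncomm_ring
      rw [e, hvs, mul_one]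
    have e2 : A * Ring.inverse B = ↑hB.2.unit * (Ring.inverse B * A) * ↑hB.2.unit⁻¹ := by
      rw [huBval, huBinv, ← mul_assoc, hiB, one_mul]
    rw [e1, spectrum.units_conjugate', e2, spectrum.units_conjugate]
  have hspecXinv : spectrum ℂ (Ring.inverse X) = spectrum ℂ (Ring.inverse A * B) := by
    have e1 : Ring.inverse X = ↑hsu.unit * (Ring.inverse A * B) * ↑hsu.unit⁻¹ := by
      rw [husval, husinv, hXinv, ← hss]
      have e : s * (Ring.inverse A * (s * s)) * v = s * Ring.inverse A * s * (s * v) := by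
        noncomm_ring
      rw [e, hsv, mul_one]
    rw [e1, spectrum.units_conjugate]
  -- spectrum of X lies in [R⁻¹, R]
  have hXspec : spectrum ℝ X ⊆ Set.Icc R⁻¹ R := by
    intro t ht
    have ht0 : 0 ≤ t := spectrum_nonneg_of_nonneg hX0 ht
    have htne : t ≠ 0 := fun h => spectrum.zero_notMem ℝ hXu (h ▸ ht)
    have htpos : 0 < t := lt_of_le_of_ne ht0 (Ne.symm htne)
    have htC : (t : ℂ) ∈ spectrum ℂ X := by
      have := spectrum.algebraMap_mem ℂ ht
      simpa using this
    have hupper : t ≤ R := by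
      rw [hspecX] at htC
      have h' : ‖(t : ℂ)‖ ≤ R := (aux_norm_le_radius htC).trans (le_max_right _ _)
      rwa [Complex.norm_real, Real.norm_eq_abs, abs_of_pos htpos] at h'
    have hXuval : (hXu.unit : H →L[ℂ] H) = X := hXu.unit_spec
    have hXuinv : ((hXu.unit⁻¹ : (H →L[ℂ] H)ˣ) : H →L[ℂ] H) = Ring.inverse X :=
      (aux_ring_inverse_eq hXu hXu.mul_val_inv).symm
    have htCne : (t : ℂ) ≠ 0 := by exact_mod_cast htne
    have htinv : ((t : ℂ))⁻¹ ∈ spectrum ℂ (Ring.inverse X) := by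
      have hmem : ((Units.mk0 (t:ℂ) htCne : ℂˣ) : ℂ) ∈ spectrum ℂ ((hXu.unit : (H →L[ℂ] H)ˣ) : H →L[ℂ] H) := by
        rw [hXuval]; simpa using htC
      have := (spectrum.inv_mem_iff (r := Units.mk0 (t:ℂ) htCne) (a := hXu.unit)).mp hmem
      rw [hXuinv] at this
      simpa using this
    have hlow : t⁻¹ ≤ R := by
      rw [hspecXinv] at htinv
      have h' : ‖((t : ℂ))⁻¹‖ ≤ R := (aux_norm_le_radius htinv).trans (le_max_left _ _)
      rwa [← Complex.ofReal_inv, Complex.norm_real, Real.norm_eq_abs, abs_of_pos (inv_pos.mpr htpos)] at h'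
    have hlow' : R⁻¹ ≤ t := by
      have h1 : (1:ℝ) ≤ R * t := by
        have := mul_le_mul_of_nonneg_right hlow ht0
        rwa [inv_mul_cancel₀ htne] at this
      have := mul_le_mul_of_nonneg_left h1 (inv_pos.mpr hRpos).le
      rwa [mul_one, ← mul_assoc, inv_mul_cancel₀ hRpos.ne', one_mul] at this
    exact ⟨hlow', hupper⟩
  -- key operator inequality and conjugation by s
  have hkey := aux_add_inv_le hR1 hX0 hXu hXspec
  have hconj := star_left_conjugate_le_conjugate hkey s
  rw [hssa.star_eq] at hconj
  have hsXs : s * X * s = A := by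
    rw [hXdef]
    have e : s * (v * A * v) * s = (s * v) * A * (v * s) := by noncomm_ring
    rw [e, hsv, hvs, one_mul, mul_one]
  have hsXis : s * Ring.inverse X * s = B * Ring.inverse A * B := by
    rw [hXinv, ← hss]
    noncomm_ring
  have hAB : A + B * Ring.inverse A * B ≤ (R + R⁻¹) • B := by
    have eL : s * (X + Ring.inverse X) * s = A + B * Ring.inverse A * B := by
      rw [mul_add, add_mul, hsXs, hsXis]
    have eR : s * ((R + R⁻¹) • (1 : H →L[ℂ] H)) * s = (R + R⁻¹) • B := by
      rw [aux_real_smul_eq, mul_smul_comm, smul_mul_assoc, mul_one, hss, ← aux_real_smul_eq]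
    rwa [eL, eR] at hconj
  -- apply Φ
  have hmono : ∀ {S T : H →L[ℂ] H}, S ≤ T → Φ S ≤ Φ T := fun {S T} h => by
    have := hΦpos _ (sub_nonneg.mpr h)
    rw [map_sub] at this
    exact sub_nonneg.mp this
  have hsmulΦ : ∀ (k : ℝ) (T : H →L[ℂ] H), Φ (k • T) = k • Φ T := fun k T => by
    rw [aux_real_smul_eq, map_smul, ← aux_real_smul_eq]
  have hPhi : Φ A + Φ (B * Ring.inverse A * B) ≤ (R + R⁻¹) • Φ B := by
    have := hmono hAB
    rwa [map_add, hsmulΦ] at this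
  -- Φ A is positive definite
  have hPA0 : (0 : H →L[ℂ] H) ≤ Φ A := hΦpos A hA0
  have hPB0 : (0 : H →L[ℂ] H) ≤ Φ B := hΦpos B hB0
  have hAsa : IsSelfAdjoint A := .of_nonneg hA0
  have hApos : ∀ x ∈ spectrum ℝ A, 0 < x := fun x hx =>
    lt_of_le_of_ne (spectrum_nonneg_of_nonneg hA0 hx)
      (Ne.symm fun h => spectrum.zero_notMem ℝ hA.2 (h ▸ hx))
  obtain ⟨m, hm0, hmle⟩ := (CFC.exists_pos_algebraMap_le_iff hAsa).mpr hApos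
  have hmap : Φ (algebraMap ℝ (H →L[ℂ] H) m) = algebraMap ℝ (H →L[ℂ] H) m := by
    rw [Algebra.algebraMap_eq_smul_one, hsmulΦ, hΦ1]
  have hmlePhi : algebraMap ℝ (H →L[ℂ] H) m ≤ Φ A := hmap ▸ hmono hmle
  have hmnn : (0 : H →L[ℂ] H) ≤ algebraMap ℝ (H →L[ℂ] H) m := by
    rw [Algebra.algebraMap_eq_smul_one]
    exact aux_smul_nonneg hm0.le zero_le_one
  have hmu : IsUnit (algebraMap ℝ (H →L[ℂ] H) m) :=
    (isUnit_iff_ne_zero.mpr hm0.ne').map (algebraMap ℝ (H →L[ℂ] H))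
  have hSu : IsUnit (Φ A) := CStarAlgebra.isUnit_of_le _ hmlePhi (IsStrictlyPositive.iff_of_unital.mpr ⟨hmnn, hmu⟩)
  -- square root of Φ A
  set s2 := CFC.sqrt (Φ A) with hs2def
  have hs20 : (0 : H →L[ℂ] H) ≤ s2 := CFC.sqrt_nonneg (a := Φ A)
  have hs2sa : IsSelfAdjoint s2 := .of_nonneg hs20
  have hs2s2 : s2 * s2 = Φ A := CFC.sqrt_mul_sqrt_self (Φ A) hPA0
  have hs2u : IsUnit s2 := aux_isUnit_sqrt hPA0 hSu
  set v2 := Ring.inverse s2 with hv2def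
  have hs2v2 : s2 * v2 = 1 := Ring.mul_inverse_cancel s2 hs2u
  have hv2s2 : v2 * s2 = 1 := Ring.inverse_mul_cancel s2 hs2u
  have hv2sa : IsSelfAdjoint v2 := aux_sa_inverse hs2sa hs2u
  have hv2v2 : v2 * v2 = Ring.inverse (Φ A) := by
    refine (aux_ring_inverse_eq hSu ?_).symm
    rw [← hs2s2, mul_assoc, ← mul_assoc s2 v2 v2, hs2v2, one_mul, hs2v2]
  set Y := v2 * Φ B * v2 with hYdef
  have hY0 : (0 : H →L[ℂ] H) ≤ Y := by
    have := star_left_conjugate_le_conjugate hPB0 v2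
    simpa [hv2sa.star_eq] using this
  set k := R + R⁻¹ with hkdef
  have hquad := aux_quad hY0 k
  have hconj2 := star_left_conjugate_le_conjugate hquad s2
  rw [hs2sa.star_eq] at hconj2
  have hs2Ys2 : s2 * Y * s2 = Φ B := by
    rw [hYdef]
    have e : s2 * (v2 * Φ B * v2) * s2 = (s2 * v2) * Φ B * (v2 * s2) := by noncomm_ring
    rw [e, hs2v2, hv2s2, one_mul, mul_one]
  have hs2YYs2 : s2 * (Y * Y) * s2 = Φ B * Ring.inverse (Φ A) * Φ B := by
    rw [hYdef, ← hv2v2]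
    have e : s2 * ((v2 * Φ B * v2) * (v2 * Φ B * v2)) * s2 =
        (s2 * v2) * (Φ B * (v2 * v2) * Φ B) * (v2 * s2) := by noncomm_ring
    rw [e, hs2v2, hv2s2, one_mul, mul_one]
  have hfinal : k • Φ B ≤ (k ^ 2 / 4) • (Φ B * Ring.inverse (Φ A) * Φ B) + Φ A := by
    have eL : s2 * (k • Y) * s2 = k • Φ B := by
      rw [aux_real_smul_eq, mul_smul_comm, smul_mul_assoc, hs2Ys2, ← aux_real_smul_eq]
    have eR : s2 * ((k ^ 2 / 4) • (Y * Y) + 1) * s2 =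
        (k ^ 2 / 4) • (Φ B * Ring.inverse (Φ A) * Φ B) + Φ A := by
      rw [mul_add, add_mul, mul_one, hs2s2, aux_real_smul_eq, mul_smul_comm, smul_mul_assoc,
        hs2YYs2, ← aux_real_smul_eq]
    rwa [eL, eR] at hconj2
  -- assemble
  have step1 : Φ (B * Ring.inverse A * B) ≤ k • Φ B - Φ A := by
    rw [le_sub_iff_add_le, add_comm]
    exact hPhi
  have step2 : k • Φ B - Φ A ≤ (k ^ 2 / 4) • (Φ B * Ring.inverse (Φ A) * Φ B) := by
    rw [sub_le_iff_le_add]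
    exact hfinal
  have hP0 : (0 : H →L[ℂ] H) ≤ Φ B * Ring.inverse (Φ A) * Φ B := by
    have hPBsa : IsSelfAdjoint (Φ B) := .of_nonneg hPB0
    have h := star_mul_self_nonneg (v2 * Φ B)
    have e : star (v2 * Φ B) * (v2 * Φ B) = Φ B * Ring.inverse (Φ A) * Φ B := by
      rw [star_mul, hv2sa.star_eq, hPBsa.star_eq, ← hv2v2]
      noncomm_ring
    rwa [e] at h
  have harith : k ^ 2 / 4 ≤ (1 + R ^ 2) ^ 2 / (4 * R) := by
    have hk2 : k ^ 2 / 4 = (1 + R ^ 2) ^ 2 / (4 * R ^ 2) := by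
      rw [hkdef]
      field_simp
      ring
    rw [hk2]
    refine div_le_div_of_nonneg_left (by positivity) (by positivity) (by nlinarith)
  have step3 : (k ^ 2 / 4) • (Φ B * Ring.inverse (Φ A) * Φ B) ≤
      ((1 + R ^ 2) ^ 2 / (4 * R)) • (Φ B * Ring.inverse (Φ A) * Φ B) := by
    rw [← sub_nonneg, ← sub_smul]
    exact aux_smul_nonneg (sub_nonneg.mpr harith) hP0
  exact le_trans (le_trans step1 step2) step3
end
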